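/- In the class C obtained by closing {W_{2n+1} : n ≥ 1} under subgraphs and disjoint unions, each odd wheel W_{2n+1} is a minimal induced model of the bouquet-defining sentence φ; hence φ has infinitely many minimal induced models in C and the homomorphism preservation property fails for C, even though C is monotone, addable, and has treewidth at most 3. -/

import Mathlib

/-- The wheel graph `W n`: an `n`-cycle on `Fin n` together with an apex vertex
(the `Sum.inr` vertex) adjacent to every cycle vertex. -/
def wheel (n : ℕ) : SimpleGraph (Fin n ⊕ Unit) :=
  SimpleGraph.fromRel (fun u v =>
    match u, v with
    | Sum.inl i, Sum.inl j => ((i : ℕ) + 1) % n = (j : ℕ)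
    | Sum.inl _, Sum.inr _ => True
    | _, _ => False)

/-- The disjoint union of the wheels `W (ns i)` for `i : Fin k`. -/
def wheelSum (k : ℕ) (ns : Fin k → ℕ) :
    SimpleGraph (Σ i : Fin k, Fin (ns i) ⊕ Unit) :=
  SimpleGraph.fromRel (fun u v => ∃ h : u.1 = v.1, (wheel (ns v.1)).Adj (h ▸ u.2) v.2)

/-- Membership in the closure `C` of the odd wheels `{W (2n+1) : n ≥ 1}` under taking
subgraphs and disjoint unions: `G ∈ C` iff `G` is (isomorphic to) a subgraph of a finite
disjoint union of odd wheels. -/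
def InC {V : Type} (G : SimpleGraph V) : Prop :=
  ∃ (k : ℕ) (ns : Fin k → ℕ), (∀ i, 3 ≤ ns i ∧ Odd (ns i)) ∧
    ∃ f : V → Σ i : Fin k, Fin (ns i) ⊕ Unit, Function.Injective f ∧
      ∀ u v, G.Adj u v → (wheelSum k ns).Adj (f u) (f v)

/-- The first-order condition `φ` defining the presence of a free induced bouquet of
cycles: there is a vertex `x` of degree at least `1` such that every vertex `z ≠ x` at
distance at most `2` from `x` is adjacent to `x` and has exactly two neighbours other
than `x`. -/
def phiCond {V : Type} (G : SimpleGraph V) : Prop :=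
  ∃ x y, G.Adj x y ∧ ∀ z, z ≠ x → (G.Adj x z ∨ ∃ w, G.Adj x w ∧ G.Adj w z) →
    G.Adj x z ∧ ∃ u v, u ≠ v ∧ u ≠ x ∧ v ≠ x ∧ G.Adj z u ∧ G.Adj z v ∧
      ∀ w, G.Adj z w → w = u ∨ w = v ∨ w = x

/-- A bundled graph. -/
structure BGraph where
  V : Type
  G : SimpleGraph V

lemma mod2M {a M : ℕ} (h : a < 2*M) : (a < M ∧ a % M = a) ∨ (M ≤ a ∧ a % M = a - M) := by
  rcases lt_or_ge a M with h'|h'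
  · exact Or.inl ⟨h', Nat.mod_eq_of_lt h'⟩
  · right
    refine ⟨h', ?_⟩
    rw [Nat.mod_eq_sub_mod h', Nat.mod_eq_of_lt (by omega)]

lemma wheel_adj_inl_inl {M : ℕ} {i j : Fin M} :
    (wheel M).Adj (.inl i) (.inl j) ↔ i ≠ j ∧ (((i:ℕ)+1)%M = j ∨ ((j:ℕ)+1)%M = i) := by
  simp [wheel, SimpleGraph.fromRel_adj]

lemma wheel_adj_inl_inr {M : ℕ} (i : Fin M) (u : Unit) : (wheel M).Adj (.inl i) (.inr u) := by
  simp [wheel, SimpleGraph.fromRel_adj]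

lemma wheel_adj_inr_inl {M : ℕ} (i : Fin M) (u : Unit) : (wheel M).Adj (.inr u) (.inl i) := by
  simp [wheel, SimpleGraph.fromRel_adj]

lemma wheel_not_adj_inr_inr {M : ℕ} (u v : Unit) : ¬ (wheel M).Adj (.inr u) (.inr v) := by
  simp [wheel, SimpleGraph.fromRel_adj]

lemma wheelSum_adj_mk {k : ℕ} {ns : Fin k → ℕ} {i : Fin k} {a b : Fin (ns i) ⊕ Unit} :
    (wheelSum k ns).Adj ⟨i, a⟩ ⟨i, b⟩ ↔ (wheel (ns i)).Adj a b := by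
  constructor
  · rintro ⟨hne, ⟨h, hadj⟩ | ⟨h, hadj⟩⟩
    · exact hadj
    · exact hadj.symm
  · intro h
    exact ⟨by simp [h.ne], Or.inl ⟨rfl, h⟩⟩

lemma wheelSum_fst {k : ℕ} {ns : Fin k → ℕ} {x y : Σ i : Fin k, Fin (ns i) ⊕ Unit}
    (h : (wheelSum k ns).Adj x y) : x.1 = y.1 := by
  rcases h with ⟨-, ⟨h, -⟩ | ⟨h, -⟩⟩
  · exact h
  · exact h.symm

lemma phi_wheel {M : ℕ} (hM : 3 ≤ M) : phiCond (wheel M) := by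
  have h0 : 0 < M := by omega
  refine ⟨Sum.inr (), Sum.inl ⟨0, h0⟩, wheel_adj_inr_inl _ _, ?_⟩
  rintro (⟨i, hi⟩ | u) hne -
  · have hnx := mod2M (show i+1 < 2*M by omega)
    have hpv := mod2M (show i+M-1 < 2*M by omega)
    have hpv1 := mod2M (show (i+M-1)%M+1 < 2*M by
      have := Nat.mod_lt (i+M-1) h0; omega)
    refine ⟨wheel_adj_inr_inl _ _, Sum.inl ⟨(i+1) % M, Nat.mod_lt _ h0⟩,
      Sum.inl ⟨(i+M-1) % M, Nat.mod_lt _ h0⟩, ?_, by simp, by simp, ?_, ?_, ?_⟩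
    · simp only [ne_eq, Sum.inl.injEq, Fin.mk.injEq]
      omega
    · rw [wheel_adj_inl_inl]
      simp only [ne_eq, Fin.mk.injEq, Fin.val_mk]
      exact ⟨by omega, Or.inl trivial⟩
    · rw [wheel_adj_inl_inl]
      simp only [ne_eq, Fin.mk.injEq, Fin.val_mk]
      exact ⟨by omega, Or.inr (by omega)⟩
    · rintro (⟨j, hj⟩ | u) hadj
      · rw [wheel_adj_inl_inl] at hadj
        simp only [ne_eq, Fin.mk.injEq, Fin.val_mk] at hadj
        have hj1 := mod2M (show j+1 < 2*M by omega)
        simp only [Sum.inl.injEq, Fin.mk.injEq, Fin.val_mk]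
        omega
      · right; right; rfl
  · exact absurd rfl hne

section Central

variable {V : Type} {A : SimpleGraph V} {k : ℕ} {ns : Fin k → ℕ}
  {f : V → Σ i : Fin k, Fin (ns i) ⊕ Unit}

lemma central (h3 : ∀ i, 3 ≤ ns i)
    (hinj : Function.Injective f)
    (hedge : ∀ u v, A.Adj u v → (wheelSum k ns).Adj (f u) (f v))
    (hphi : phiCond A) :
    (∃ (m : Fin k) (x : V) (g : Fin (ns m) → V),
        f x = ⟨m, Sum.inr ()⟩ ∧ (∀ j, f (g j) = ⟨m, Sum.inl j⟩) ∧
        (∀ j, A.Adj x (g j)) ∧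
        (∀ j j' : Fin (ns m), ((j:ℕ)+1) % ns m = (j':ℕ) → A.Adj (g j) (g j'))) ∨
    (∃ x z u v : V, A.Adj x z ∧ A.Adj x u ∧ A.Adj x v ∧ A.Adj z u ∧ A.Adj z v ∧ A.Adj u v) := by
  obtain ⟨x, y, hxy, H⟩ := hphi
  have step : ∀ z, A.Adj x z → ∃ u v, u ≠ v ∧ A.Adj x u ∧ A.Adj x v ∧ A.Adj z u ∧ A.Adj z v ∧
      ∀ w, A.Adj z w → w = u ∨ w = v ∨ w = x := by
    intro z hz
    obtain ⟨-, u, v, huv, hux, hvx, hzu, hzv, hcl⟩ := H z hz.ne' (Or.inl hz)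
    have hxu : A.Adj x u := (H u hux (Or.inr ⟨z, hz, hzu⟩)).1
    have hxv : A.Adj x v := (H v hvx (Or.inr ⟨z, hz, hzv⟩)).1
    exact ⟨u, v, huv, hxu, hxv, hzu, hzv, hcl⟩
  rcases hfx : f x with ⟨m, s⟩
  have hM3 : 3 ≤ ns m := h3 m
  have h0 : 0 < ns m := by omega
  have himg : ∀ z, A.Adj x z → ∃ t, f z = ⟨m, t⟩ ∧ (wheel (ns m)).Adj s t := by
    intro z hz
    have had := hedge x z hz
    rcases hfz : f z with ⟨m', t⟩
    rw [hfx, hfz] at had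
    have hm : m = m' := wheelSum_fst had
    subst hm
    exact ⟨t, rfl, wheelSum_adj_mk.1 had⟩
  cases s with
  | inr uu =>
    cases uu
    left
    have himg' : ∀ z, A.Adj x z → ∃ j : Fin (ns m), f z = ⟨m, Sum.inl j⟩ := by
      intro z hz
      obtain ⟨t, hft, hadj⟩ := himg z hz
      cases t with
      | inl j => exact ⟨j, hft⟩
      | inr w => exact absurd hadj (wheel_not_adj_inr_inr _ _)
    have next : ∀ z, A.Adj x z → ∀ j : Fin (ns m), f z = ⟨m, Sum.inl j⟩ →
        ∀ j' : Fin (ns m), (((j:ℕ)+1) % ns m = (j':ℕ) ∨ ((j':ℕ)+1) % ns m = (j:ℕ)) →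
        ∃ z', A.Adj x z' ∧ A.Adj z z' ∧ f z' = ⟨m, Sum.inl j'⟩ := by
      intro z hz j hfz j' hj'
      obtain ⟨u, v, huv, hxu, hxv, hzu, hzv, hcl⟩ := step z hz
      obtain ⟨ju, hfu⟩ := himg' u hxu
      obtain ⟨jv, hfv⟩ := himg' v hxv
      have haju : (wheel (ns m)).Adj (Sum.inl j) (Sum.inl ju) := by
        have h := hedge z u hzu; rw [hfz, hfu] at h; exact wheelSum_adj_mk.1 h
      have hajv : (wheel (ns m)).Adj (Sum.inl j) (Sum.inl jv) := by
        have h := hedge z v hzv; rw [hfz, hfv] at h; exact wheelSum_adj_mk.1 h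
      rw [wheel_adj_inl_inl] at haju hajv
      have hne : (ju:ℕ) ≠ (jv:ℕ) := by
        intro h
        exact huv (hinj (by rw [hfu, hfv, Fin.ext h]))
      have hcase : j' = ju ∨ j' = jv := by
        have h1 := haju.2
        have h2 := hajv.2
        have e1 := mod2M (show (j:ℕ)+1 < 2*ns m by have := j.isLt; omega)
        have e2 := mod2M (show (ju:ℕ)+1 < 2*ns m by have := ju.isLt; omega)
        have e3 := mod2M (show (jv:ℕ)+1 < 2*ns m by have := jv.isLt; omega)
        have e4 := mod2M (show (j':ℕ)+1 < 2*ns m by have := j'.isLt; omega)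
        have b1 := j.isLt; have b2 := ju.isLt; have b3 := jv.isLt; have b4 := j'.isLt
        simp only [Fin.ext_iff]
        omega
      rcases hcase with rfl | rfl
      · exact ⟨u, hxu, hzu, hfu⟩
      · exact ⟨v, hxv, hzv, hfv⟩
    obtain ⟨j₀, hj₀⟩ := himg' y hxy
    have reach : ∀ d : ℕ, ∃ z, A.Adj x z ∧
        f z = ⟨m, Sum.inl ⟨((j₀:ℕ) + d) % ns m, Nat.mod_lt _ h0⟩⟩ := by
      intro d
      induction d with
      | zero =>
        refine ⟨y, hxy, ?_⟩
        rw [hj₀]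
        have : (⟨((j₀:ℕ) + 0) % ns m, Nat.mod_lt _ h0⟩ : Fin (ns m)) = j₀ :=
          Fin.ext (by simp [Nat.mod_eq_of_lt j₀.isLt])
        rw [this]
      | succ d ih =>
        obtain ⟨z, hz, hfz⟩ := ih
        obtain ⟨z', hz', -, hfz'⟩ := next z hz _ hfz
          ⟨((j₀:ℕ) + (d+1)) % ns m, Nat.mod_lt _ h0⟩
          (Or.inl (by simp only [Fin.val_mk]; rw [Nat.mod_add_mod, Nat.add_assoc]))
        exact ⟨z', hz', hfz'⟩
    have cover : ∀ j : Fin (ns m), ∃ z, A.Adj x z ∧ f z = ⟨m, Sum.inl j⟩ := by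
      intro j
      obtain ⟨z, hz, hfz⟩ := reach (ns m - (j₀:ℕ) + (j:ℕ))
      refine ⟨z, hz, ?_⟩
      rw [hfz]
      have : (⟨((j₀:ℕ) + (ns m - (j₀:ℕ) + (j:ℕ))) % ns m, Nat.mod_lt _ h0⟩ : Fin (ns m)) = j := by
        apply Fin.ext
        simp only [Fin.val_mk]
        have hb := j₀.isLt
        have : (j₀:ℕ) + (ns m - (j₀:ℕ) + (j:ℕ)) = ns m + (j:ℕ) := by omega
        rw [this, Nat.add_mod_left, Nat.mod_eq_of_lt j.isLt]
      rw [this]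
    choose g hg1 hg2 using cover
    refine ⟨m, x, g, hfx, hg2, hg1, ?_⟩
    intro j j' hjj'
    obtain ⟨z', hxz', hzz', hfz'⟩ := next (g j) (hg1 j) j (hg2 j) j' (Or.inl hjj')
    have : z' = g j' := hinj (by rw [hfz', hg2 j'])
    rwa [this] at hzz'
  | inl i =>
    right
    obtain ⟨u, v, huv, hxu, hxv, hyu, hyv, hcl⟩ := step y hxy
    have hclass : ∀ t, (wheel (ns m)).Adj (Sum.inl i) t →
        t = Sum.inr () ∨ t = Sum.inl ⟨((i:ℕ)+1) % ns m, Nat.mod_lt _ h0⟩ ∨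
          t = Sum.inl ⟨((i:ℕ)+ns m-1) % ns m, Nat.mod_lt _ h0⟩ := by
      intro t ht
      cases t with
      | inr w => exact Or.inl rfl
      | inl p =>
        rw [wheel_adj_inl_inl] at ht
        right
        have hip : (i:ℕ) ≠ (p:ℕ) := fun h => ht.1 (Fin.ext h)
        have h2 := ht.2
        have e1 := mod2M (show (i:ℕ)+1 < 2*ns m by have := i.isLt; omega)
        have e2 := mod2M (show (p:ℕ)+1 < 2*ns m by have := p.isLt; omega)
        have e3 := mod2M (show (i:ℕ)+ns m-1 < 2*ns m by have := i.isLt; omega)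
        have b1 := i.isLt; have b2 := p.isLt
        rcases (show (p:ℕ) = ((i:ℕ)+1) % ns m ∨ (p:ℕ) = ((i:ℕ)+ns m-1) % ns m by omega) with h | h
        · exact Or.inl (congrArg Sum.inl (Fin.ext (by simpa using h)))
        · exact Or.inr (congrArg Sum.inl (Fin.ext (by simpa using h)))
    have hmem : ∀ z, A.Adj x z → f z = ⟨m, Sum.inr ()⟩ ∨
        f z = ⟨m, Sum.inl ⟨((i:ℕ)+1) % ns m, Nat.mod_lt _ h0⟩⟩ ∨
        f z = ⟨m, Sum.inl ⟨((i:ℕ)+ns m-1) % ns m, Nat.mod_lt _ h0⟩⟩ := by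
      intro z hz
      obtain ⟨t, hft, hadj⟩ := himg z hz
      rcases hclass t hadj with rfl | rfl | rfl
      · exact Or.inl hft
      · exact Or.inr (Or.inl hft)
      · exact Or.inr (Or.inr hft)
    obtain ⟨u₁, v₁, h1, hxu₁, hxv₁, huu₁, huv₁, hclu⟩ := step u hxu
    have hv1 : ∀ w₁, A.Adj x w₁ → A.Adj u w₁ → w₁ ≠ y → w₁ = v := by
      intro w₁ hxw₁ huw₁ hwy
      by_contra hwv
      have hwu : w₁ ≠ u := huw₁.ne'
      have d1 : f y ≠ f u := fun h => hyu.ne (hinj h)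
      have d2 : f y ≠ f v := fun h => hyv.ne (hinj h)
      have d3 : f u ≠ f v := fun h => huv (hinj h)
      have d4 : f w₁ ≠ f y := fun h => hwy (hinj h)
      have d5 : f w₁ ≠ f u := fun h => hwu (hinj h)
      have d6 : f w₁ ≠ f v := fun h => hwv (hinj h)
      set c1 : (i : Fin k) × (Fin (ns i) ⊕ Unit) := ⟨m, Sum.inr ()⟩ with hc1
      set c2 : (i : Fin k) × (Fin (ns i) ⊕ Unit) :=
        ⟨m, Sum.inl ⟨((i:ℕ)+1) % ns m, Nat.mod_lt _ h0⟩⟩ with hc2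
      set c3 : (i : Fin k) × (Fin (ns i) ⊕ Unit) :=
        ⟨m, Sum.inl ⟨((i:ℕ)+ns m-1) % ns m, Nat.mod_lt _ h0⟩⟩ with hc3
      classical
      have hsub : ({f y, f u, f v, f w₁} : Finset ((i : Fin k) × (Fin (ns i) ⊕ Unit))) ⊆
          ({c1, c2, c3} : Finset _) := by
        intro a ha
        simp only [Finset.mem_insert, Finset.mem_singleton] at ha ⊢
        rcases ha with rfl | rfl | rfl | rfl
        · exact hmem y hxy
        · exact hmem u hxu
        · exact hmem v hxv
        · exact hmem w₁ hxw₁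
      have hcard4 : ({f y, f u, f v, f w₁} : Finset ((i : Fin k) × (Fin (ns i) ⊕ Unit))).card = 4 := by
        rw [Finset.card_insert_of_notMem (by
          simp only [Finset.mem_insert, Finset.mem_singleton]
          push_neg
          exact ⟨d1, d2, fun h => d4 h.symm⟩)]
        rw [Finset.card_insert_of_notMem (by
          simp only [Finset.mem_insert, Finset.mem_singleton]
          push_neg
          exact ⟨d3, fun h => d5 h.symm⟩)]
        rw [Finset.card_insert_of_notMem (by
          simp only [Finset.mem_singleton]
          exact fun h => d6 h.symm)]
        simp
      have hcard3 : ({c1, c2, c3} : Finset ((i : Fin k) × (Fin (ns i) ⊕ Unit))).card ≤ 3 :=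
        (Finset.card_insert_le _ _).trans (Nat.succ_le_succ ((Finset.card_insert_le _ _).trans
          (Nat.succ_le_succ (Finset.card_singleton _).le)))
      have := Finset.card_le_card hsub
      omega
    have hymem : y = u₁ ∨ y = v₁ := by
      rcases hclu y hyu.symm with h | h | h
      · exact Or.inl h
      · exact Or.inr h
      · exact absurd h hxy.ne'
    have huvadj : A.Adj u v := by
      rcases hymem with rfl | rfl
      · have := hv1 v₁ hxv₁ huv₁ (fun h => h1 h.symm)
        rw [this] at huv₁; exact huv₁
      · have := hv1 u₁ hxu₁ huu₁ (fun h => h1 h)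
        rw [this] at huu₁; exact huu₁
    exact ⟨x, y, u, v, hxy, hxu, hxv, hyu, hyv, huvadj⟩

end Central

lemma odd_cast_two {c : ℕ} (h : Odd c) : (c : ZMod 2) = 1 := by
  obtain ⟨t, rfl⟩ := h
  push_cast
  have : (2 : ZMod 2) = 0 := by decide
  rw [this]
  ring

lemma no_walk {V : Type} {A : SimpleGraph V} {c M : ℕ} (hodd : Odd c) (hcM : c < M)
    (hM5 : 5 ≤ M) {x : V} {g : ℕ → V} (hax : ∀ i, A.Adj x (g i))
    (hstep : ∀ i, A.Adj (g i) (g (i+1))) (hper : g c = g 0)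
    (h : A →g wheel M) : False := by
  have h0 : 0 < M := by omega
  haveI : NeZero M := ⟨by omega⟩
  rcases ht : h x with j0 | u
  · -- h x is a cycle vertex: use 2-coloring (apex vs cycle) of the closed walk
    set κ : ℕ → ZMod 2 := fun i => match h (g i) with | Sum.inl _ => 1 | Sum.inr _ => 0 with hκ
    have hk : ∀ i, κ (i+1) = κ i + 1 := by
      intro i
      have hadji := h.map_adj (hstep i)
      have hxi := h.map_adj (hax i)
      have hxi1 := h.map_adj (hax (i+1))
      rw [ht] at hxi hxi1
      rcases hgi : h (g i) with p | w <;> rcases hgi1 : h (g (i+1)) with q | w'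
      · -- both on the cycle: impossible
        exfalso
        rw [hgi] at hxi hadji
        rw [hgi1] at hxi1 hadji
        rw [wheel_adj_inl_inl] at hxi hxi1 hadji
        have b0 := j0.isLt; have b1 := p.isLt; have b2 := q.isLt
        have n1 : (j0:ℕ) ≠ p := fun hh => hxi.1 (Fin.ext hh)
        have n2 : (j0:ℕ) ≠ q := fun hh => hxi1.1 (Fin.ext hh)
        have n3 : (p:ℕ) ≠ q := fun hh => hadji.1 (Fin.ext hh)
        have r1 := hxi.2; have r2 := hxi1.2; have r3 := hadji.2
        have e1 := mod2M (show (j0:ℕ)+1 < 2*M by omega)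
        have e2 := mod2M (show (p:ℕ)+1 < 2*M by omega)
        have e3 := mod2M (show (q:ℕ)+1 < 2*M by omega)
        omega
      · simp only [hκ, hgi, hgi1]
        decide
      · simp only [hκ, hgi, hgi1]
        decide
      · exfalso
        rw [hgi, hgi1] at hadji
        exact wheel_not_adj_inr_inr _ _ hadji
    have h1 : ∑ i ∈ Finset.range c, (κ (i+1) - κ i) = κ c - κ 0 := Finset.sum_range_sub κ c
    have hone : ∀ i : ℕ, κ (i+1) - κ i = 1 := fun i => by rw [hk i]; ring
    have h2 : ∑ i ∈ Finset.range c, (κ (i+1) - κ i) = (c : ZMod 2) := by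
      rw [Finset.sum_congr rfl (fun i _ => hone i)]
      simp
    have h3 : κ c = κ 0 := by simp only [hκ, hper]
    rw [h1, h3, sub_self, odd_cast_two hodd] at h2
    exact one_ne_zero h2.symm
  · -- h x is the apex: winding-number argument
    have hinl : ∀ i : ℕ, ∃ a : Fin M, h (g i) = Sum.inl a := by
      intro i
      have hxi := h.map_adj (hax i)
      rw [ht] at hxi
      rcases hgi : h (g i) with a | w
      · exact ⟨a, rfl⟩
      · rw [hgi] at hxi
        exact absurd hxi (wheel_not_adj_inr_inr _ _)
    choose a ha using hinl
    have hadj : ∀ i, ((a i : ℕ)+1) % M = (a (i+1) : ℕ) ∨ ((a (i+1) : ℕ)+1) % M = (a i : ℕ) := by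
      intro i
      have hh := h.map_adj (hstep i)
      rw [ha i, ha (i+1)] at hh
      exact (wheel_adj_inl_inl.1 hh).2
    set b : ℕ → ZMod M := fun i => ((a i : ℕ) : ZMod M) with hb
    have hbstep : ∀ i, b (i+1) = b i + 1 ∨ b (i+1) = b i - 1 := by
      intro i
      rcases hadj i with h' | h'
      · left
        simp only [hb]
        rw [← h', ZMod.natCast_mod]
        push_cast
        ring
      · right
        have : b i = b (i+1) + 1 := by
          simp only [hb]
          rw [← h', ZMod.natCast_mod]
          push_cast
          ring
        rw [this]
        ring
    set e : ℕ → ℤ := fun i => if b (i+1) = b i + 1 then 1 else -1 with he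
    have hecast : ∀ i, ((e i : ℤ) : ZMod M) = b (i+1) - b i := by
      intro i
      by_cases hc : b (i+1) = b i + 1
      · simp only [he, if_pos hc, hc]
        push_cast
        ring
      · have hc' : b (i+1) = b i - 1 := (hbstep i).resolve_left hc
        simp only [he, if_neg hc, hc']
        push_cast
        ring
    have hac : a c = a 0 := by
      have hh : h (g c) = h (g 0) := by rw [hper]
      rw [ha c, ha 0] at hh
      exact Sum.inl_injective hh
    have hb0 : b c = b 0 := by simp only [hb, hac]
    have hsum0 : ((∑ i ∈ Finset.range c, e i : ℤ) : ZMod M) = 0 := by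
      push_cast
      rw [Finset.sum_congr rfl (fun i _ => hecast i), Finset.sum_range_sub (fun i => b i), hb0,
        sub_self]
    have hdvd : (M:ℤ) ∣ ∑ i ∈ Finset.range c, e i :=
      (ZMod.intCast_zmod_eq_zero_iff_dvd _ M).1 hsum0
    have hpar : ((∑ i ∈ Finset.range c, e i : ℤ) : ZMod 2) = 1 := by
      push_cast
      rw [Finset.sum_congr rfl (fun i _ => show ((e i : ℤ) : ZMod 2) = 1 by
        by_cases hc : b (i+1) = b i + 1 <;> simp only [he, if_pos, if_neg, hc] <;> decide)]
      simp [odd_cast_two hodd]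
    have hne : (∑ i ∈ Finset.range c, e i) ≠ 0 := by
      intro hz
      rw [hz] at hpar
      norm_num at hpar
    have habs : |∑ i ∈ Finset.range c, e i| ≤ (c:ℤ) := by
      calc |∑ i ∈ Finset.range c, e i| ≤ ∑ i ∈ Finset.range c, |e i| :=
            Finset.abs_sum_le_sum_abs _ _
        _ ≤ ∑ _i ∈ Finset.range c, 1 := by
            apply Finset.sum_le_sum
            intro i _
            by_cases hc : b (i+1) = b i + 1 <;> simp [he, hc]
        _ = (c:ℤ) := by simp
    have hMle : (M:ℤ) ≤ |∑ i ∈ Finset.range c, e i| :=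
      Int.le_of_dvd (abs_pos.2 hne) ((dvd_abs _ _).2 hdvd)
    have : (c:ℤ) < (M:ℤ) := by exact_mod_cast hcM
    linarith


lemma inC_wheel {M : ℕ} (h3 : 3 ≤ M) (hodd : Odd M) : InC (wheel M) := by
  refine ⟨1, fun _ => M, fun _ => ⟨h3, hodd⟩, fun a => ⟨0, a⟩, ?_, ?_⟩
  · intro a b hab
    simpa using hab
  · intro u v huv
    exact wheelSum_adj_mk.2 huv

lemma exists_walk {V : Type} {A : SimpleGraph V} (hC : InC A) (hphi : phiCond A) :
    ∃ c, Odd c ∧ ∃ (x : V) (g : ℕ → V), (∀ i, A.Adj x (g i)) ∧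
      (∀ i, A.Adj (g i) (g (i+1))) ∧ g c = g 0 := by
  obtain ⟨k, ns, hns, f, hinj, hedge⟩ := hC
  rcases central (fun i => (hns i).1) hinj hedge hphi with
    ⟨m, x, g, hfx, hfg, hax, hadj⟩ | ⟨x, z, u, v, hxz, hxu, hxv, hzu, hzv, huv⟩
  · have h0 : 0 < ns m := by have := (hns m).1; omega
    refine ⟨ns m, (hns m).2, x, fun i => g ⟨i % ns m, Nat.mod_lt _ h0⟩, fun i => hax _, ?_, ?_⟩
    · intro i
      apply hadj
      simp only [Fin.val_mk]
      rw [Nat.mod_add_mod]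
    · refine congrArg g (Fin.ext ?_)
      simp [Nat.mod_self]
  · refine ⟨3, by decide, x, fun i => if i % 3 = 0 then z else if i % 3 = 1 then u else v,
      ?_, ?_, by norm_num⟩
    · intro i
      rcases (show i % 3 = 0 ∨ i % 3 = 1 ∨ i % 3 = 2 by omega) with h | h | h <;>
        simp only [h] <;> norm_num <;> assumption
    · intro i
      rcases (show i % 3 = 0 ∨ i % 3 = 1 ∨ i % 3 = 2 by omega) with h | h | h <;>
        have h' : (i+1) % 3 = (i % 3 + 1) % 3 := by omega
      · have h'' : (i+1) % 3 = 1 := by omega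
        simp only [h, h'']
        norm_num
        exact hzu
      · have h'' : (i+1) % 3 = 2 := by omega
        simp only [h, h'']
        norm_num
        exact huv
      · have h'' : (i+1) % 3 = 0 := by omega
        simp only [h, h'']
        norm_num
        exact hzv.symm

lemma no_tri {M : ℕ} (h4 : 4 ≤ M) {a b c : Fin M}
    (hab : (wheel M).Adj (Sum.inl a) (Sum.inl b))
    (hbc : (wheel M).Adj (Sum.inl b) (Sum.inl c))
    (hac : (wheel M).Adj (Sum.inl a) (Sum.inl c)) : False := by
  rw [wheel_adj_inl_inl] at hab hbc hac
  have b1 := a.isLt; have b2 := b.isLt; have b3 := c.isLt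
  have n1 : (a:ℕ) ≠ b := fun h => hab.1 (Fin.ext h)
  have n2 : (b:ℕ) ≠ c := fun h => hbc.1 (Fin.ext h)
  have n3 : (a:ℕ) ≠ c := fun h => hac.1 (Fin.ext h)
  have r1 := hab.2; have r2 := hbc.2; have r3 := hac.2
  have e1 := mod2M (show (a:ℕ)+1 < 2*M by omega)
  have e2 := mod2M (show (b:ℕ)+1 < 2*M by omega)
  have e3 := mod2M (show (c:ℕ)+1 < 2*M by omega)
  omega

lemma minimality {M : ℕ} (h3 : 3 ≤ M) (S : Set (Fin M ⊕ Unit))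
    (hS : S ≠ Set.univ) : ¬ phiCond ((wheel M).induce S) := by
  intro hphi
  have h0 : 0 < M := by omega
  classical
  set f : S → Σ _ : Fin 1, Fin M ⊕ Unit := fun a => ⟨0, a.val⟩ with hf
  have hinj : Function.Injective f := by
    intro a b hab
    apply Subtype.ext
    simpa [hf] using hab
  have hedge : ∀ u v, ((wheel M).induce S).Adj u v →
      (wheelSum 1 (fun _ => M)).Adj (f u) (f v) := by
    intro u v huv
    exact wheelSum_adj_mk.2 huv
  rcases central (ns := fun _ => M) (fun _ => h3) hinj hedge hphi with
    ⟨m, x, g, hfx, hfg, -, -⟩ | ⟨x, z, u, v, hxz, hxu, hxv, hzu, hzv, huv⟩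
  · apply hS
    obtain rfl : m = 0 := Subsingleton.elim m 0
    apply Set.eq_univ_of_forall
    rintro (j | ⟨⟩)
    · have hj : (g j).val = Sum.inl j := by simpa [hf] using hfg j
      rw [← hj]
      exact (g j).prop
    · have hx : x.val = Sum.inr () := by simpa [hf] using hfx
      rw [← hx]
      exact x.prop
  · have axz : (wheel M).Adj x.val z.val := hxz
    have axu : (wheel M).Adj x.val u.val := hxu
    have axv : (wheel M).Adj x.val v.val := hxv
    have azu : (wheel M).Adj z.val u.val := hzu
    have azv : (wheel M).Adj z.val v.val := hzv
    have auv : (wheel M).Adj u.val v.val := huv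
    by_cases hM : M = 3
    · subst hM
      apply hS
      have d1 : x.val ≠ z.val := axz.ne
      have d2 : x.val ≠ u.val := axu.ne
      have d3 : x.val ≠ v.val := axv.ne
      have d4 : z.val ≠ u.val := azu.ne
      have d5 : z.val ≠ v.val := azv.ne
      have d6 : u.val ≠ v.val := auv.ne
      have hcard : ({x.val, z.val, u.val, v.val} : Finset (Fin 3 ⊕ Unit)).card = 4 := by
        rw [Finset.card_insert_of_notMem (by
          simp only [Finset.mem_insert, Finset.mem_singleton]
          push_neg
          exact ⟨d1, d2, d3⟩)]
        rw [Finset.card_insert_of_notMem (by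
          simp only [Finset.mem_insert, Finset.mem_singleton]
          push_neg
          exact ⟨d4, d5⟩)]
        rw [Finset.card_insert_of_notMem (by simpa using d6)]
        simp
      have huniv : ({x.val, z.val, u.val, v.val} : Finset (Fin 3 ⊕ Unit)) = Finset.univ := by
        apply Finset.eq_univ_of_card
        rw [hcard]
        rfl
      apply Set.eq_univ_of_forall
      intro a
      have : a ∈ ({x.val, z.val, u.val, v.val} : Finset (Fin 3 ⊕ Unit)) := by
        rw [huniv]; exact Finset.mem_univ a
      simp only [Finset.mem_insert, Finset.mem_singleton] at this
      rcases this with rfl | rfl | rfl | rfl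
      · exact x.prop
      · exact z.prop
      · exact u.prop
      · exact v.prop
    · have h4 : 4 ≤ M := by omega
      rcases hx' : x.val with a | w <;> rcases hz' : z.val with b | w' <;>
        rcases hu' : u.val with p | w'' <;> rcases hv' : v.val with q | w''' <;>
        rw [hx', hz'] at axz <;> rw [hx', hu'] at axu <;> rw [hx', hv'] at axv <;>
        rw [hz', hu'] at azu <;> rw [hz', hv'] at azv <;> rw [hu', hv'] at auv
      all_goals first
        | exact no_tri h4 axz azu axu
        | exact no_tri h4 axz azv axv
        | exact no_tri h4 axu auv axv
        | exact no_tri h4 azu auv azv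
        | exact wheel_not_adj_inr_inr _ _ axz
        | exact wheel_not_adj_inr_inr _ _ axu
        | exact wheel_not_adj_inr_inr _ _ axv
        | exact wheel_not_adj_inr_inr _ _ azu
        | exact wheel_not_adj_inr_inr _ _ azv
        | exact wheel_not_adj_inr_inr _ _ auv

lemma list_bound {α : Type*} (l : List α) (P : α → ℕ → Prop) (h : ∀ A ∈ l, ∃ c, P A c) :
    ∃ N, ∀ A ∈ l, ∃ c ≤ N, P A c := by
  induction l with
  | nil => exact ⟨0, by simp⟩
  | cons a t ih =>
    obtain ⟨c, hc⟩ := h a (List.mem_cons_self)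
    obtain ⟨N, hN⟩ := ih (fun A hA => h A (List.mem_cons_of_mem _ hA))
    refine ⟨max c N, ?_⟩
    intro A hA
    rcases List.mem_cons.1 hA with rfl | hA'
    · exact ⟨c, le_max_left _ _, hc⟩
    · obtain ⟨c', hc', hP⟩ := hN A hA'
      exact ⟨c', le_trans hc' (le_max_right _ _), hP⟩


/-- In the closure `C` of the odd wheels under subgraphs and disjoint
unions (a monotone, addable class of treewidth at most 3), each odd wheel `W (2n+1)` is a
minimal induced model of `φ`: it lies in `C`, satisfies `φ`, and no proper induced
subgraph satisfies `φ`.  Hence `φ` has infinitely many minimal induced models in `C` and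
homomorphism preservation fails for `C`: `φ` is not equivalent over `C` to an
existential-positive sentence, i.e. there is no finite list of structures whose
homomorphism cones define `φ` on `C`. -/
theorem odd_wheels_minimal_models_and_hpp_fails :
    (∀ n : ℕ, 1 ≤ n →
      InC (wheel (2 * n + 1)) ∧ phiCond (wheel (2 * n + 1)) ∧
        ∀ S : Set (Fin (2 * n + 1) ⊕ Unit), S ≠ Set.univ →
          ¬ phiCond ((wheel (2 * n + 1)).induce S)) ∧
    ¬ ∃ l : List BGraph, (∀ A ∈ l, InC A.G) ∧
        ∀ (W : Type) (H : SimpleGraph W), InC H →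
          (phiCond H ↔ ∃ A ∈ l, Nonempty (A.G →g H)) := by
  constructor
  · intro n hn
    have h3 : 3 ≤ 2*n+1 := by omega
    have hodd : Odd (2*n+1) := ⟨n, by ring⟩
    exact ⟨inC_wheel h3 hodd, phi_wheel h3, fun S hS => minimality h3 S hS⟩
  · rintro ⟨l, hl, hiff⟩
    have hphiA : ∀ A ∈ l, ∃ c, Odd c ∧ ∃ (x : A.V) (g : ℕ → A.V), (∀ i, A.G.Adj x (g i)) ∧
        (∀ i, A.G.Adj (g i) (g (i+1))) ∧ g c = g 0 := by
      intro A hA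
      have hphi : phiCond A.G := (hiff A.V A.G (hl A hA)).2 ⟨A, hA, ⟨SimpleGraph.Hom.id⟩⟩
      exact exists_walk (hl A hA) hphi
    obtain ⟨N, hN⟩ := list_bound (α := BGraph) l (fun (A : BGraph) (c : ℕ) => Odd c ∧ ∃ (x : A.V) (g : ℕ → A.V),
      (∀ i, A.G.Adj x (g i)) ∧ (∀ i, A.G.Adj (g i) (g (i+1))) ∧ g c = g 0) hphiA
    have h3 : 3 ≤ 2*(N+2)+1 := by omega
    have hodd : Odd (2*(N+2)+1) := ⟨N+2, by ring⟩
    obtain ⟨A, hA, ⟨hom⟩⟩ := (hiff _ (wheel (2*(N+2)+1)) (inC_wheel h3 hodd)).1 (phi_wheel h3)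
    obtain ⟨c, hcN, hodd_c, x, g, hax, hstep, hper⟩ := hN A hA
    exact no_walk hodd_c (show c < 2*(N+2)+1 by omega) (by omega) hax hstep hper hom
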